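/- Let t ≥ 200 be an integer, let p be real with 1/(t+1) ≤ p ≤ 2/(t+3), and let s be an integer with 2 ≤ s ≤ 9. Then g(s, 0) < g(1, 0), where g(s, s') := f(t−s+s', s, p)·f(t+s−s', s', p). -/

import Mathlib

open Finset

open scoped Classical

noncomputable section

/-- The `p`-weight of a family of subsets of `[n] = {1,…,n}`. -/
def mu (n : ℕ) (p : ℝ) (𝓕 : Finset (Finset ℕ)) : ℝ :=
  ∑ F ∈ 𝓕, p ^ F.card * (1 - p) ^ (n - F.card)

/-- Two families are cross `t`-intersecting. -/
def CrossIntersecting (t : ℕ) (𝓐 𝓑 : Finset (Finset ℕ)) : Prop :=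
  ∀ A ∈ 𝓐, ∀ B ∈ 𝓑, t ≤ (A ∩ B).card

/-- The Frankl family `F_i^ℓ = {F ⊆ [n] : |F ∩ [ℓ+2i]| ≥ ℓ+i}`. -/
def FF (n ℓ i : ℕ) : Finset (Finset ℕ) :=
  (Finset.Icc 1 n).powerset.filter fun F => ℓ + i ≤ (F ∩ Finset.Icc 1 (ℓ + 2 * i)).card

/-- `F` reaches level `ℓ`: there is `0 ≤ j ≤ n` with `2|F ∩ [j]| ≥ j + ℓ`. -/
def Reaches (n ℓ : ℕ) (F : Finset ℕ) : Prop :=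
  ∃ j ≤ n, j + ℓ ≤ 2 * (F ∩ Finset.Icc 1 j).card

/-- The number of steps `0 ≤ j ≤ n` at which `F` hits level `ℓ`, i.e. `2|F ∩ [j]| = j + ℓ`. -/
def hitCount (n ℓ : ℕ) (F : Finset ℕ) : ℕ :=
  ((Finset.range (n + 1)).filter fun j => 2 * (F ∩ Finset.Icc 1 j).card = j + ℓ).card

/-- `F^ℓ`: all subsets of `[n]` reaching level `ℓ`. -/
def Fwalk (n ℓ : ℕ) : Finset (Finset ℕ) :=
  (Finset.Icc 1 n).powerset.filter fun F => Reaches n ℓ F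

/-- `tilde F^ℓ`: all subsets of `[n]` reaching level `ℓ+1`. -/
def Ftilde (n ℓ : ℕ) : Finset (Finset ℕ) :=
  (Finset.Icc 1 n).powerset.filter fun F => Reaches n (ℓ + 1) F

/-- `hat F^ℓ`: subsets not reaching level `ℓ+1` and hitting level `ℓ` exactly once. -/
def Fhat (n ℓ : ℕ) : Finset (Finset ℕ) :=
  (Finset.Icc 1 n).powerset.filter fun F => ¬ Reaches n (ℓ + 1) F ∧ hitCount n ℓ F = 1

/-- `ddot F^ℓ`: subsets not reaching level `ℓ+1` and hitting level `ℓ` at least twice. -/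
def Fddot (n ℓ : ℕ) : Finset (Finset ℕ) :=
  (Finset.Icc 1 n).powerset.filter fun F => ¬ Reaches n (ℓ + 1) F ∧ 2 ≤ hitCount n ℓ F

/-- The `(i,j)`-shift of a single set `F`, relative to the family `𝓕`. -/
def shiftSet (i j : ℕ) (𝓕 : Finset (Finset ℕ)) (F : Finset ℕ) : Finset ℕ :=
  if j ∈ F ∧ i ∉ F ∧ insert i (F.erase j) ∉ 𝓕 then insert i (F.erase j) else F

/-- The `(i,j)`-shift `s_{ij}(𝓕)` of a family `𝓕`. -/
def shiftFam (i j : ℕ) (𝓕 : Finset (Finset ℕ)) : Finset (Finset ℕ) :=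
  𝓕.image (shiftSet i j 𝓕)

/-- A family is shifted if all shifts `s_{ij}`, `1 ≤ i < j ≤ n`, fix it. -/
def Shifted (n : ℕ) (𝓕 : Finset (Finset ℕ)) : Prop :=
  ∀ i j : ℕ, 1 ≤ i → i < j → j ≤ n → shiftFam i j 𝓕 = 𝓕

/-- A family of subsets of `[n]` is inclusion maximal. -/
def InclMax (n : ℕ) (𝓕 : Finset (Finset ℕ)) : Prop :=
  ∀ F ∈ 𝓕, ∀ F' : Finset ℕ, F ⊆ F' → F' ⊆ Finset.Icc 1 n → F' ∈ 𝓕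

/-- `λ(𝓕)`: the largest `λ ≥ 0` such that every member of `𝓕` reaches level `λ`. -/
def lam (n : ℕ) (𝓕 : Finset (Finset ℕ)) : ℕ :=
  Nat.findGreatest (fun ℓ => ∀ F ∈ 𝓕, Reaches n ℓ F) n

/-- Two families of subsets of `[n]` are isomorphic via a permutation of `[n]`. -/
def Isom (n : ℕ) (𝓖₁ 𝓖₂ : Finset (Finset ℕ)) : Prop :=
  ∃ σ : Equiv.Perm ℕ, (∀ k ∈ Finset.Icc 1 n, σ k ∈ Finset.Icc 1 n) ∧
    𝓖₁ = 𝓖₂.image fun G => G.image σ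

/-- The quantity `f(ℓ, i, p)` from Ahlswede–Khachatrian type estimates. -/
def fLP (ℓ i : ℕ) (p : ℝ) : ℝ :=
  (p / (1 - p)) ^ (ℓ + 1) +
    (Nat.choose (ℓ + 2 * i) i : ℝ) * ((ℓ + 1 : ℝ) / (ℓ + i + 1)) * p ^ (ℓ + i) *
      (1 - p) ^ i * (1 - p / (1 - p))

/-- The walk `D_s^t(i) = [t−1] ∪ {t+s,…,t+2s} ∪ {t+2s+i+2k : k ≥ 1} ∩ [n]`. -/
def DD (n t s i : ℕ) : Finset ℕ :=
  Finset.Icc 1 (t - 1) ∪ Finset.Icc (t + s) (t + 2 * s) ∪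
    ((Finset.Icc 1 n).filter fun m => ∃ k ∈ Finset.Icc 1 n, m = t + 2 * s + i + 2 * k)

end

section helperlemmas


lemma key_poly (t : ℕ) (ht : 200 ≤ t) : ∀ s : ℕ, 2 ≤ s → s ≤ 9 →
    ((t + s).choose s : ℝ) * (((t : ℝ) - s + 1)) * 2 ^ (s - 1)
      ≤ (t : ℝ) * (((t : ℝ) + 1)) * ((t : ℝ) + 3) ^ (s - 1) := by
  have hT : (200 : ℝ) ≤ t := by exact_mod_cast ht
  intro s hs2
  induction s, hs2 using Nat.le_induction with
  | base =>
    intro _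
    have hdvd : 2 ∣ (t + 2) * (t + 2 - 1) := by
      rw [show t + 2 - 1 = t + 1 from rfl, mul_comm]
      exact (Nat.even_mul_succ_self (t + 1)).two_dvd
    have hnat : (t + 2).choose 2 * 2 = (t + 2) * (t + 1) := by
      rw [Nat.choose_two_right, Nat.div_mul_cancel hdvd]
      rfl
    have h2 : ((t + 2).choose 2 : ℝ) * 2 = ((t : ℝ) + 2) * ((t : ℝ) + 1) := by
      exact_mod_cast hnat
    norm_num
    nlinarith [h2, hT]
  | succ s hs2 ih =>
    intro hs9
    have ihs := ih (by omega)
    have hsT : (s : ℝ) ≤ 9 := by exact_mod_cast (by omega : s ≤ 9)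
    have hs1 : (1 : ℝ) ≤ (s : ℝ) := by exact_mod_cast (by omega : 1 ≤ s)
    set T := (t : ℝ) with hTdef
    have hC : (0:ℝ) ≤ ((t + s).choose s : ℝ) := by positivity
    have hid : ((t + s + 1).choose (s + 1) : ℝ) * ((s : ℝ) + 1)
        = ((t + s).choose s : ℝ) * (T + s + 1) := by
      have := Nat.add_one_mul_choose_eq (t + s) s
      have h' : ((t + s + 1) * ((t + s).choose s) : ℕ) = ((t + s + 1).choose (s + 1) * (s + 1) : ℕ) := by
        simpa [Nat.succ_eq_add_one] using this
      calc ((t + s + 1).choose (s + 1) : ℝ) * ((s : ℝ) + 1)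
          = (((t + s + 1).choose (s + 1) * (s + 1) : ℕ) : ℝ) := by push_cast; ring
        _ = (((t + s + 1) * ((t + s).choose s) : ℕ) : ℝ) := by rw [h']
        _ = ((t + s).choose s : ℝ) * (T + s + 1) := by push_cast; ring
    -- rewrite exponents
    have e1 : (s + 1 - 1 : ℕ) = (s - 1) + 1 := by omega
    rw [e1, pow_succ, pow_succ]
    push_cast
    -- goal: C' * (T - (s+1) + 1) * (2^(s-1) * 2) ≤ T * (T+1) * ((T+3)^(s-1) * (T+3))
    set A := (2:ℝ) ^ (s - 1) with hA
    set B := (T + 3) ^ (s - 1) with hB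
    have hA0 : 0 < A := by positivity
    have hB0 : 0 < B := by positivity
    have hs1' : (0:ℝ) < (s : ℝ) + 1 := by linarith
    rw [← mul_le_mul_iff_of_pos_right hs1']
    have key2 : 2 * (T + s + 1) ≤ ((s:ℝ) + 1) * (T + 3) := by nlinarith
    calc ((t + s + 1).choose (s + 1) : ℝ) * (T - ((s:ℝ) + 1) + 1) * (A * 2) * ((s:ℝ) + 1)
        = (((t + s + 1).choose (s + 1) : ℝ) * ((s:ℝ) + 1)) * (T - s) * (A * 2) := by ring
      _ = ((t + s).choose s : ℝ) * (T + s + 1) * (T - s) * (A * 2) := by rw [hid]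
      _ = (((t + s).choose s : ℝ) * (T - s) * A) * (2 * (T + s + 1)) := by ring
      _ ≤ (((t + s).choose s : ℝ) * (T - s) * A) * (((s:ℝ) + 1) * (T + 3)) := by
          apply mul_le_mul_of_nonneg_left key2
          apply mul_nonneg (mul_nonneg hC (by linarith)) (le_of_lt hA0)
      _ ≤ (((t + s).choose s : ℝ) * (T - s + 1) * A) * (((s:ℝ) + 1) * (T + 3)) := by
          apply mul_le_mul_of_nonneg_right _ (by positivity)
          apply mul_le_mul_of_nonneg_right _ (le_of_lt hA0)
          apply mul_le_mul_of_nonneg_left (by linarith) hC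
      _ ≤ (T * (T + 1) * B) * (((s:ℝ) + 1) * (T + 3)) := by
          apply mul_le_mul_of_nonneg_right ihs (by positivity)
      _ = T * (T + 1) * (B * (T + 3)) * ((s:ℝ) + 1) := by ring


lemma main_ineq (X P w q p α T c : ℝ) (sN : ℕ)
    (hX : 0 < X) (hP : 0 < P) (hw : 0 < w) (hq0 : 0 < q) (hq1 : q ≤ 1)
    (hp : 0 < p) (hpα : p < α) (hqα : q * α = p) (hc : 0 ≤ c)
    (hkey : c * p ^ sN ≤ T) (hsN : 1 ≤ sN) :
    (X + c * P * q ^ (sN + 1) * w) * (X * α ^ (2 * sN + 2) + P * p ^ (sN + 1) * w)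
      < (X * α ^ sN + T * P * q * w) * (X * α ^ (sN + 2) + P * p * w) := by
  have hα : 0 < α := hp.trans hpα
  have hpsN : (0:ℝ) ≤ p ^ sN := by positivity
  have hT : 0 ≤ T := le_trans (mul_nonneg hc hpsN) hkey
  have hqa : q ^ sN * α ^ sN = p ^ sN := by rw [← mul_pow, hqα]
  have e1 : p ^ (sN + 1) < p * α ^ sN := by
    have : p ^ sN < α ^ sN := pow_lt_pow_left₀ hpα (le_of_lt hp) (by omega)
    calc p ^ (sN + 1) = p * p ^ sN := by ring
      _ < p * α ^ sN := by exact mul_lt_mul_of_pos_left this hp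
  have e2 : c * (q ^ (sN + 1) * α ^ (2 * sN + 2)) ≤ T * (q * α ^ (sN + 2)) := by
    have hr : q ^ (sN + 1) * α ^ (2 * sN + 2) = (q * α ^ (sN + 2)) * (q ^ sN * α ^ sN) := by
      ring
    rw [hr, hqa]
    calc c * ((q * α ^ (sN + 2)) * p ^ sN) = (c * p ^ sN) * (q * α ^ (sN + 2)) := by ring
      _ ≤ T * (q * α ^ (sN + 2)) := by
          apply mul_le_mul_of_nonneg_right hkey (by positivity)
  have e3 : c * (q ^ (sN + 1) * p ^ (sN + 1)) ≤ T * (q * p) := by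
    have hr : q ^ (sN + 1) * p ^ (sN + 1) = (q * p) * (q ^ sN * p ^ sN) := by ring
    rw [hr]
    have hq' : q ^ sN * p ^ sN ≤ 1 * p ^ sN :=
      mul_le_mul_of_nonneg_right (pow_le_one₀ (le_of_lt hq0) hq1) hpsN
    calc c * ((q * p) * (q ^ sN * p ^ sN)) = (c * (q ^ sN * p ^ sN)) * (q * p) := by ring
      _ ≤ T * (q * p) := by
          apply mul_le_mul_of_nonneg_right _ (by positivity)
          calc c * (q ^ sN * p ^ sN) ≤ c * (1 * p ^ sN) :=
                mul_le_mul_of_nonneg_left hq' hc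
            _ = c * p ^ sN := by ring
            _ ≤ T := hkey
  have E1 := mul_lt_mul_of_pos_left e1 (show 0 < X * P * w by positivity)
  have E2 := mul_le_mul_of_nonneg_left e2 (show 0 ≤ X * P * w by positivity)
  have E3 := mul_le_mul_of_nonneg_left e3 (show 0 ≤ P * P * w * w by positivity)
  have hsplit : α ^ sN * α ^ (sN + 2) = α ^ (2 * sN + 2) := by ring
  nlinarith [E1, E2, E3, hsplit, sq_nonneg X]

lemma key_ineq (t s : ℕ) (ht : 200 ≤ t) (hs2 : 2 ≤ s) (hs : s ≤ 9) (p : ℝ)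
    (hp0 : 0 ≤ p) (hp2 : p ≤ 2 / ((t : ℝ) + 3)) :
    (Nat.choose (t + s) s : ℝ) * (((t : ℝ) - s + 1) / ((t : ℝ) + 1)) * p ^ (s - 1) ≤ t := by
  have hT : (200 : ℝ) ≤ t := by exact_mod_cast ht
  have hT1 : (0:ℝ) < (t:ℝ) + 1 := by linarith
  have hT3 : (0:ℝ) < (t:ℝ) + 3 := by linarith
  have hsR : ((s:ℝ)) ≤ 9 := by exact_mod_cast hs
  have hrat : 0 ≤ ((t : ℝ) - s + 1) / ((t : ℝ) + 1) := by
    apply div_nonneg _ (le_of_lt hT1); linarith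
  have hC : (0:ℝ) ≤ (Nat.choose (t + s) s : ℝ) := by positivity
  have hpow : p ^ (s-1) ≤ (2 / ((t:ℝ)+3)) ^ (s-1) := pow_le_pow_left₀ hp0 hp2 _
  have H := key_poly t ht s hs2 hs
  calc (Nat.choose (t + s) s : ℝ) * (((t : ℝ) - s + 1) / ((t : ℝ) + 1)) * p ^ (s - 1)
      ≤ (Nat.choose (t + s) s : ℝ) * (((t : ℝ) - s + 1) / ((t : ℝ) + 1)) * (2 / ((t:ℝ)+3)) ^ (s-1) :=
        mul_le_mul_of_nonneg_left hpow (mul_nonneg hC hrat)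
    _ = ((Nat.choose (t + s) s : ℝ) * (((t : ℝ) - s + 1)) * 2 ^ (s-1)) / ((t:ℝ)+1) / (((t:ℝ)+3) ^ (s-1)) := by
        rw [div_pow]; ring
    _ ≤ (t:ℝ) := by
        rw [div_le_iff₀ (by positivity), div_le_iff₀ hT1]; nlinarith [H]

end helperlemmas

/-- `g(s,0) < g(1,0)` for `2 ≤ s ≤ 9`. -/
theorem statement_15 (t : ℕ) (ht : 200 ≤ t) (p : ℝ)
    (hp1 : 1 / ((t : ℝ) + 1) ≤ p) (hp2 : p ≤ 2 / ((t : ℝ) + 3))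
    (s : ℕ) (hs2 : 2 ≤ s) (hs : s ≤ 9) :
    fLP (t - s) s p * fLP (t + s) 0 p < fLP (t - 1) 1 p * fLP (t + 1) 0 p := by
  -- basic positivity facts
  have hst : s ≤ t := by omega
  have ht1 : 1 ≤ t := by omega
  have hT : (200 : ℝ) ≤ (t : ℝ) := by exact_mod_cast ht
  have hT3 : (0:ℝ) < (t:ℝ) + 3 := by linarith
  have hT1 : (0:ℝ) < (t:ℝ) + 1 := by linarith
  have hp0 : 0 < p := lt_of_lt_of_le (by positivity) hp1
  have hphalf : p < 1/2 := by
    have h23 : (2:ℝ)/((t:ℝ)+3) < 1/2 := by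
      rw [div_lt_div_iff₀ hT3 (by norm_num)]; linarith
    linarith
  have hq0 : 0 < 1 - p := by linarith
  have hqne : (1:ℝ) - p ≠ 0 := ne_of_gt hq0
  have hα0 : 0 < p / (1 - p) := div_pos hp0 hq0
  have hpα : p < p / (1 - p) := by
    rw [lt_div_iff₀ hq0]; nlinarith
  have hα1 : p / (1 - p) < 1 := by
    rw [div_lt_one hq0]; linarith
  have hw : 0 < 1 - p / (1 - p) := by linarith
  have hqα : (1 - p) * (p / (1 - p)) = p := by field_simp
  -- rewrite the four fLP values
  have hF1 : fLP (t - s) s p = (p / (1 - p)) ^ (t - s + 1) +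
      (Nat.choose (t + s) s : ℝ) * (((t:ℝ) - s + 1) / ((t:ℝ) + 1)) * p ^ t * (1 - p) ^ s *
        (1 - p / (1 - p)) := by
    unfold fLP
    rw [show t - s + 2 * s = t + s from by omega, show t - s + s = t from by omega]
    rw [Nat.cast_sub hst]
    ring_nf
  have hF2 : fLP (t + s) 0 p = (p / (1 - p)) ^ (t + s + 1) + p ^ (t + s) * (1 - p / (1 - p)) := by
    unfold fLP
    have hne : ((t:ℝ) + (s:ℝ) + 0 + 1) ≠ 0 := by positivity
    push_cast
    rw [Nat.choose_zero_right]
    field_simp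
    simp only [Nat.cast_one]; ring
  have hG1 : fLP (t - 1) 1 p = (p / (1 - p)) ^ t +
      (t : ℝ) * p ^ t * (1 - p) * (1 - p / (1 - p)) := by
    unfold fLP
    rw [show t - 1 + 2 * 1 = t + 1 from by omega, show t - 1 + 1 = t from by omega]
    rw [Nat.choose_one_right, Nat.cast_sub ht1]
    push_cast
    have hne : (t:ℝ) - 1 + 1 + 1 ≠ 0 := by
      intro h; rw [show (t:ℝ) - 1 + 1 + 1 = (t:ℝ) + 1 from by ring] at h; linarith
    field_simp
    ring
  have hG2 : fLP (t + 1) 0 p = (p / (1 - p)) ^ (t + 2) + p ^ (t + 1) * (1 - p / (1 - p)) := by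
    unfold fLP
    have hne : ((t:ℝ) + 1 + 0 + 1) ≠ 0 := by positivity
    push_cast
    rw [Nat.choose_zero_right]
    field_simp
    simp only [Nat.cast_one]; ring
  rw [hF1, hF2, hG1, hG2]
  -- decompose powers
  have p1 : (p / (1 - p)) ^ t = (p / (1 - p)) ^ (t - s + 1) * (p / (1 - p)) ^ (s - 1) := by
    rw [← pow_add]; congr 1; omega
  have p2 : (p / (1 - p)) ^ (t + s + 1) = (p / (1 - p)) ^ (t - s + 1) * (p / (1 - p)) ^ (2 * (s-1) + 2) := by
    rw [← pow_add]; congr 1; omega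
  have p3 : (p / (1 - p)) ^ (t + 2) = (p / (1 - p)) ^ (t - s + 1) * (p / (1 - p)) ^ ((s-1) + 2) := by
    rw [← pow_add]; congr 1; omega
  have p4 : p ^ (t + s) = p ^ t * p ^ ((s-1) + 1) := by rw [← pow_add]; congr 1; omega
  have p5 : p ^ (t + 1) = p ^ t * p := by rw [pow_succ]
  have p6 : (1 - p) ^ s = (1 - p) ^ ((s-1) + 1) := by congr 1; omega
  rw [p1, p2, p3, p4, p5, p6]
  have hkey : (Nat.choose (t + s) s : ℝ) * (((t:ℝ) - s + 1) / ((t:ℝ) + 1)) * p ^ (s - 1) ≤ t :=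
    key_ineq t s ht hs2 hs p (le_of_lt hp0) hp2
  have hc : (0:ℝ) ≤ (Nat.choose (t + s) s : ℝ) * (((t:ℝ) - s + 1) / ((t:ℝ) + 1)) := by
    apply mul_nonneg (by positivity)
    apply div_nonneg _ (le_of_lt hT1)
    have : (s:ℝ) ≤ 9 := by exact_mod_cast hs
    linarith
  have H := main_ineq ((p / (1 - p)) ^ (t - s + 1)) (p ^ t) (1 - p / (1 - p)) (1 - p) p
    (p / (1 - p)) (t:ℝ) ((Nat.choose (t + s) s : ℝ) * (((t:ℝ) - s + 1) / ((t:ℝ) + 1))) (s - 1)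
    (by positivity) (by positivity) hw hq0 (by linarith) hp0 hpα hqα hc hkey (by omega)
  calc ((p / (1 - p)) ^ (t - s + 1) +
        (Nat.choose (t + s) s : ℝ) * (((t:ℝ) - s + 1) / ((t:ℝ) + 1)) * p ^ t * (1 - p) ^ ((s-1)+1) *
          (1 - p / (1 - p))) *
      ((p / (1 - p)) ^ (t - s + 1) * (p / (1 - p)) ^ (2 * (s-1) + 2) +
        p ^ t * p ^ ((s-1)+1) * (1 - p / (1 - p)))
      = ((p / (1 - p)) ^ (t - s + 1) +
          (Nat.choose (t + s) s : ℝ) * (((t:ℝ) - s + 1) / ((t:ℝ) + 1)) * p ^ t * (1 - p) ^ ((s-1)+1) *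
            (1 - p / (1 - p))) *
        ((p / (1 - p)) ^ (t - s + 1) * (p / (1 - p)) ^ (2 * (s-1) + 2) +
          p ^ t * p ^ ((s-1)+1) * (1 - p / (1 - p))) := rfl
    _ < ((p / (1 - p)) ^ (t - s + 1) * (p / (1 - p)) ^ (s-1) + (t:ℝ) * p ^ t * (1 - p) *
          (1 - p / (1 - p))) *
        ((p / (1 - p)) ^ (t - s + 1) * (p / (1 - p)) ^ ((s-1) + 2) + p ^ t * p *
          (1 - p / (1 - p))) := by
        refine lt_of_le_of_lt (le_of_eq ?_) (lt_of_lt_of_le H (le_of_eq ?_)) <;> ring
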